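/- Let z, s, ż, ṡ, z̈, s̈, σ, μ be real numbers satisfying ż s + z ṡ = z s − σμ and z s̈ + s z̈ = −2 ż ṡ. Define z(α) = z − ż sin α + z̈ (1 − cos α) and s(α) = s − ṡ sin α + s̈ (1 − cos α). Then for every α ∈ ℝ, z(α) s(α) = z s (1 − sin α) + σ μ sin α − (ż s̈ + z̈ ṡ) sin α (1 − cos α) + (z̈ s̈ − ż ṡ)(1 − cos α)². -/
import Mathlib

/-- Componentwise complementarity product along the arc:
if `ż s + z ṡ = z s − σμ` and `z s̈ + s z̈ = −2 ż ṡ`, then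
`z(α) s(α) = z s (1 − sin α) + σμ sin α − (ż s̈ + z̈ ṡ) sin α (1 − cos α)
+ (z̈ s̈ − ż ṡ)(1 − cos α)²`. -/
theorem complementarity_along_arc (z s zdot sdot zddot sddot σ μ : ℝ)
    (h1 : zdot * s + z * sdot = z * s - σ * μ)
    (h2 : z * sddot + s * zddot = -2 * zdot * sdot) :
    ∀ α : ℝ,
      (z - zdot * Real.sin α + zddot * (1 - Real.cos α)) *
        (s - sdot * Real.sin α + sddot * (1 - Real.cos α)) =
      z * s * (1 - Real.sin α) + σ * μ * Real.sin α
        - (zdot * sddot + zddot * sdot) * Real.sin α * (1 - Real.cos α)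
        + (zddot * sddot - zdot * sdot) * (1 - Real.cos α) ^ 2 := by
  intro α
  have hs := Real.sin_sq_add_cos_sq α
  linear_combination (-Real.sin α) * h1 + (1 - Real.cos α) * h2 + (zdot * sdot) * hs
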